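/- Let f : [0,a] → ℝ be C^1 on [0,a] and C^2 on (0,a], with f(0) = f'(0) = 0 and f > 0, f'' > 0 on (0,a]. Then there exists g : [0,a] → ℝ, C^1 on [0,a] and C^2 on (0,a], such that g(0) = 0, g'(0) > 0, g ≥ f on [0,a], g'' > 0 on (0,a], and g = f on a neighborhood of a. -/

import Mathlib

noncomputable def psi5 (a x : ℝ) : ℝ := Real.smoothTransition ((2*a/3 - x) / (a/3))
noncomputable def phi5 (a x : ℝ) : ℝ := x * psi5 a x

lemma phi5_contDiff (a : ℝ) : ContDiff ℝ (⊤ : ℕ∞) (phi5 a) := by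
  unfold phi5 psi5
  exact contDiff_id.mul (Real.smoothTransition.contDiff.comp
    ((contDiff_const.sub contDiff_id).div_const _))

lemma phi5_eq_id {a x : ℝ} (ha : 0 < a) (hx : x ≤ a/3) : phi5 a x = x := by
  have : (1:ℝ) ≤ (2*a/3 - x) / (a/3) := (le_div_iff₀ (by linarith)).2 (by linarith)
  simp [phi5, psi5, Real.smoothTransition.one_of_one_le this]

lemma phi5_eq_zero {a x : ℝ} (ha : 0 < a) (hx : 2*a/3 ≤ x) : phi5 a x = 0 := by
  have : (2*a/3 - x) / (a/3) ≤ 0 := div_nonpos_of_nonpos_of_nonneg (by linarith) (by linarith)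
  simp [phi5, psi5, Real.smoothTransition.zero_of_nonpos this]

lemma phi5_nonneg {a x : ℝ} (hx : 0 ≤ x) : 0 ≤ phi5 a x :=
  mul_nonneg hx (Real.smoothTransition.nonneg _)

lemma phi5_deriv_eq_one {a x : ℝ} (ha : 0 < a) (hx : x < a/3) : deriv (phi5 a) x = 1 := by
  have h : phi5 a =ᶠ[nhds x] id :=
    Filter.eventuallyEq_of_mem (Iio_mem_nhds hx) fun z hz => phi5_eq_id ha (le_of_lt hz)
  rw [h.deriv_eq, deriv_id]

lemma phi5_deriv2_eq_zero {a x : ℝ} (ha : 0 < a) (hx : x < a/3) :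
    deriv (deriv (phi5 a)) x = 0 := by
  have h : deriv (phi5 a) =ᶠ[nhds x] (fun _ => (1:ℝ)) :=
    Filter.eventuallyEq_of_mem (Iio_mem_nhds hx) fun z hz => phi5_deriv_eq_one ha hz
  rw [h.deriv_eq, deriv_const]

lemma phi5_deriv_contDiff (a : ℝ) : ContDiff ℝ (⊤ : ℕ∞) (deriv (phi5 a)) :=
  (contDiff_infty_iff_deriv.1 (phi5_contDiff a)).2

lemma phi5_hasDerivAt (a x : ℝ) : HasDerivAt (phi5 a) (deriv (phi5 a) x) x :=
  ((phi5_contDiff a).differentiable (by simp) x).hasDerivAt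

lemma phi5_deriv_hasDerivAt (a x : ℝ) :
    HasDerivAt (deriv (phi5 a)) (deriv (deriv (phi5 a)) x) x :=
  ((phi5_deriv_contDiff a).differentiable (by simp) x).hasDerivAt



/-- (Lemma 5.9 of the paper.) Let `f : [0,a] → ℝ` be `C¹` on `[0,a]` and `C²`
on `(0,a]`, with `f(0) = f'(0) = 0` and `f > 0`, `f'' > 0` on `(0,a]`.  Then there exists
`g : [0,a] → ℝ`, `C¹` on `[0,a]` and `C²` on `(0,a]`, with `g(0) = 0`, `g'(0) > 0`,
`g ≥ f` on `[0,a]`, `g'' > 0` on `(0,a]`, and `g = f` near `a`. -/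
theorem stmt_5 (a : ℝ) (ha : 0 < a) (f f' f'' : ℝ → ℝ)
    (hd1 : ∀ x ∈ Set.Icc 0 a, HasDerivWithinAt f (f' x) (Set.Icc 0 a) x)
    (hf'c : ContinuousOn f' (Set.Icc 0 a))
    (hd2 : ∀ x ∈ Set.Ioc 0 a, HasDerivWithinAt f' (f'' x) (Set.Icc 0 a) x)
    (hf''c : ContinuousOn f'' (Set.Ioc 0 a))
    (hf0 : f 0 = 0) (hf'0 : f' 0 = 0)
    (hfpos : ∀ x ∈ Set.Ioc 0 a, 0 < f x)
    (hf''pos : ∀ x ∈ Set.Ioc 0 a, 0 < f'' x) :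
    ∃ g g' g'' : ℝ → ℝ,
      (∀ x ∈ Set.Icc 0 a, HasDerivWithinAt g (g' x) (Set.Icc 0 a) x) ∧
      ContinuousOn g' (Set.Icc 0 a) ∧
      (∀ x ∈ Set.Ioc 0 a, HasDerivWithinAt g' (g'' x) (Set.Icc 0 a) x) ∧
      ContinuousOn g'' (Set.Ioc 0 a) ∧
      g 0 = 0 ∧ 0 < g' 0 ∧
      (∀ x ∈ Set.Icc 0 a, f x ≤ g x) ∧
      (∀ x ∈ Set.Ioc 0 a, 0 < g'' x) ∧
      (∃ δ > (0 : ℝ), ∀ x ∈ Set.Icc 0 a, a - δ ≤ x → g x = f x) := by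
  -- minimum of f'' on [a/4, a]
  have hsub : Set.Icc (a/4) a ⊆ Set.Ioc 0 a := fun x hx => ⟨by linarith [hx.1], hx.2⟩
  obtain ⟨x₀, hx₀, hmin⟩ := isCompact_Icc.exists_isMinOn ⟨a, by constructor <;> linarith⟩
    (hf''c.mono hsub)
  set m : ℝ := f'' x₀ with hm
  have hmpos : 0 < m := hf''pos x₀ (hsub hx₀)
  -- maximum of |φ''| on [0, a]
  have hc2 : Continuous (deriv (deriv (phi5 a))) :=
    (contDiff_infty_iff_deriv.1 (phi5_deriv_contDiff a)).2.continuous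
  obtain ⟨y₀, _, hmax⟩ := (isCompact_Icc (a := (0:ℝ)) (b := a)).exists_isMaxOn
    ⟨0, by constructor <;> linarith⟩
    ((continuous_abs.comp hc2).continuousOn)
  set M : ℝ := |deriv (deriv (phi5 a)) y₀| with hM
  have hMnn : 0 ≤ M := abs_nonneg _
  set ε : ℝ := m / (2 * (M + 1)) with hε
  have hεpos : 0 < ε := div_pos hmpos (by linarith)
  have hεM : ε * M < m := by
    rw [hε]
    rw [div_mul_eq_mul_div, div_lt_iff₀ (by linarith)]
    nlinarith
  refine ⟨fun x => f x + ε * phi5 a x, fun x => f' x + ε * deriv (phi5 a) x,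
    fun x => f'' x + ε * deriv (deriv (phi5 a)) x, ?_, ?_, ?_, ?_, ?_, ?_, ?_, ?_, ?_⟩
  · exact fun x hx => (hd1 x hx).add
      (((phi5_hasDerivAt a x).const_mul ε).hasDerivWithinAt)
  · exact hf'c.add (Continuous.continuousOn (by
      exact continuous_const.mul (phi5_deriv_contDiff a).continuous))
  · exact fun x hx => (hd2 x hx).add
      (((phi5_deriv_hasDerivAt a x).const_mul ε).hasDerivWithinAt)
  · exact (hf''c.mono (fun x hx => hx)).add (Continuous.continuousOn
      (continuous_const.mul hc2))
  · simp [hf0, phi5, psi5]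
  · have h1 : deriv (phi5 a) 0 = 1 := phi5_deriv_eq_one ha (by linarith)
    simp [hf'0, h1, hεpos]
  · intro x hx
    have h0 := phi5_nonneg (a := a) hx.1
    have : 0 ≤ ε * phi5 a x := mul_nonneg hεpos.le h0
    simp only []
    linarith
  · intro x hx
    simp only []
    rcases le_or_gt x (a/4) with h | h
    · have hz : deriv (deriv (phi5 a)) x = 0 := phi5_deriv2_eq_zero ha (by linarith)
      rw [hz]
      simpa using hf''pos x hx
    · have hxI : x ∈ Set.Icc (a/4) a := ⟨h.le, hx.2⟩
      have h1 : m ≤ f'' x := hmin hxI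
      have h2 : |deriv (deriv (phi5 a)) x| ≤ M := hmax ⟨by linarith [hx.1], hx.2⟩
      have h3 : -(ε * M) ≤ ε * deriv (deriv (phi5 a)) x := by
        have := neg_abs_le (deriv (deriv (phi5 a)) x)
        nlinarith
      linarith
  · refine ⟨a/3, by linarith, fun x _ hx => ?_⟩
    simp only []
    rw [phi5_eq_zero ha (by linarith), mul_zero, add_zero]
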